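/- Let N ≥ 2 and 0 < k < N, and let w : Fin N → Bool satisfy w(0) = false, w(N−1) = true, and have exactly k visits to S1. Then the number j of ascents of w satisfies 1 ≤ j ≤ min(k, N−k), and the number of descents of w equals j − 1. (This justifies the summation limit c₁(k,N) = min(k, N−k) for part L in Theorem 1.) -/

import Mathlib

open Finset

def mcStep (p00 p01 p10 p11 : ℝ) : Bool → Bool → ℝ
  | false, false => p00
  | false, true  => p01
  | true,  false => p10
  | true,  true  => p11

def pathWeight (p00 p01 p10 p11 : ℝ) {N : ℕ} (w : Fin N → Bool) : ℝ :=
  ∏ i : Fin (N - 1),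
    mcStep p00 p01 p10 p11
      (w ⟨i.val, by have := i.isLt; omega⟩)
      (w ⟨i.val + 1, by have := i.isLt; omega⟩)

def visitsS1 {N : ℕ} (w : Fin N → Bool) : ℕ :=
  (Finset.univ.filter fun i : Fin N => w i = true).card

def descents {N : ℕ} (w : Fin N → Bool) : ℕ :=
  (Finset.univ.filter fun i : Fin (N - 1) =>
    w ⟨i.val, by have := i.isLt; omega⟩ = true ∧
    w ⟨i.val + 1, by have := i.isLt; omega⟩ = false).card

def ascents {N : ℕ} (w : Fin N → Bool) : ℕ :=
  (Finset.univ.filter fun i : Fin (N - 1) =>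
    w ⟨i.val, by have := i.isLt; omega⟩ = false ∧
    w ⟨i.val + 1, by have := i.isLt; omega⟩ = true).card


def vAux {N : ℕ} (w : Fin N → Bool) : ℕ → ℤ :=
  fun n => if hn : n < N then (if w ⟨n, hn⟩ = true then 1 else 0) else 0

lemma lemA {N : ℕ} (w : Fin N → Bool) :
    (ascents w : ℤ) = ∑ i : Fin (N - 1),
        (if (w ⟨i.val, by have := i.isLt; omega⟩ = false ∧
             w ⟨i.val + 1, by have := i.isLt; omega⟩ = true) then (1:ℤ) else 0) := by
  unfold ascents
  rw [Finset.card_filter, Nat.cast_sum]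
  simp only [Nat.cast_ite, Nat.cast_one, Nat.cast_zero]

lemma lemD {N : ℕ} (w : Fin N → Bool) :
    (descents w : ℤ) = ∑ i : Fin (N - 1),
        (if (w ⟨i.val, by have := i.isLt; omega⟩ = true ∧
             w ⟨i.val + 1, by have := i.isLt; omega⟩ = false) then (1:ℤ) else 0) := by
  unfold descents
  rw [Finset.card_filter, Nat.cast_sum]
  simp only [Nat.cast_ite, Nat.cast_one, Nat.cast_zero]

lemma lemStep {N : ℕ} (w : Fin N → Bool) (i : Fin (N - 1)) :
    (if (w ⟨i.val, by have := i.isLt; omega⟩ = false ∧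
         w ⟨i.val + 1, by have := i.isLt; omega⟩ = true) then (1:ℤ) else 0)
    - (if (w ⟨i.val, by have := i.isLt; omega⟩ = true ∧
         w ⟨i.val + 1, by have := i.isLt; omega⟩ = false) then (1:ℤ) else 0)
    = vAux w (i.val + 1) - vAux w i.val := by
  have hi : i.val < N - 1 := i.isLt
  have h1 : i.val < N := by omega
  have h2 : i.val + 1 < N := by omega
  simp only [vAux, dif_pos h1, dif_pos h2]
  rcases hb : w ⟨i.val, h1⟩ <;> rcases hc : w ⟨i.val + 1, h2⟩ <;> simp [hb, hc]

lemma lemKey {N : ℕ} (hN : 2 ≤ N) (w : Fin N → Bool)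
    (h0 : w ⟨0, by omega⟩ = false) (hl : w ⟨N - 1, by omega⟩ = true) :
    (ascents w : ℤ) = (descents w : ℤ) + 1 := by
  have tele : ∑ i ∈ Finset.range (N - 1), (vAux w (i + 1) - vAux w i)
      = vAux w (N - 1) - vAux w 0 := Finset.sum_range_sub (vAux w) (N - 1)
  have hv0 : vAux w 0 = 0 := by
    simp only [vAux, dif_pos (by omega : (0:ℕ) < N)]
    simp [h0]
  have hvN : vAux w (N - 1) = 1 := by
    simp only [vAux, dif_pos (by omega : N - 1 < N)]
    simp [hl]
  have sum_eq : (ascents w : ℤ) - (descents w : ℤ)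
      = ∑ i : Fin (N - 1), (vAux w (i.val + 1) - vAux w i.val) := by
    rw [lemA, lemD, ← Finset.sum_sub_distrib]
    exact Finset.sum_congr rfl fun i _ => lemStep w i
  have conv : ∑ i : Fin (N - 1), (vAux w (i.val + 1) - vAux w i.val)
      = ∑ i ∈ Finset.range (N - 1), (vAux w (i + 1) - vAux w i) :=
    Finset.sum_range (fun i => vAux w (i + 1) - vAux w i) |>.symm
  have : (ascents w : ℤ) - (descents w : ℤ) = 1 := by
    rw [sum_eq, conv, tele, hv0, hvN]; ring
  linarith

theorem stmt19 (N k : ℕ) (hN : 2 ≤ N) (hk0 : 0 < k) (hkN : k < N)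
    (w : Fin N → Bool) (h0 : w ⟨0, by omega⟩ = false) (hl : w ⟨N - 1, by omega⟩ = true)
    (hv : visitsS1 w = k) :
    1 ≤ ascents w ∧ ascents w ≤ min k (N - k) ∧ descents w = ascents w - 1 := by
  have key : (ascents w : ℤ) = (descents w : ℤ) + 1 := lemKey hN w h0 hl
  have hTk : (Finset.univ.filter fun i : Fin N => w i = true).card = k := hv
  have hFk : (Finset.univ.filter fun i : Fin N => w i = false).card = N - k := by
    have := Finset.card_filter_add_card_filter_not
      (s := (Finset.univ : Finset (Fin N))) (p := fun i : Fin N => w i = true)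
    simp only [Finset.card_univ, Fintype.card_fin] at this
    have hneg : (Finset.univ.filter fun i : Fin N => ¬ (w i = true)).card
        = (Finset.univ.filter fun i : Fin N => w i = false).card := by
      congr 1
      apply Finset.filter_congr
      intro i _
      simp [Bool.not_eq_true]
    omega
  have hle1 : ascents w ≤ k := by
    rw [← hTk]
    unfold ascents
    apply Finset.card_le_card_of_injOn
      (fun i => ⟨i.val + 1, by have := i.isLt; omega⟩)
    · intro i hi
      simp only [Finset.mem_coe, Finset.mem_filter, Finset.mem_univ, true_and] at hi ⊢
      exact hi.2
    · intro i _ j _ hij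
      simp only [Fin.mk.injEq] at hij
      exact Fin.ext (by omega)
  have hle2 : ascents w ≤ N - k := by
    rw [← hFk]
    unfold ascents
    apply Finset.card_le_card_of_injOn
      (fun i => ⟨i.val, by have := i.isLt; omega⟩)
    · intro i hi
      simp only [Finset.mem_coe, Finset.mem_filter, Finset.mem_univ, true_and] at hi ⊢
      exact hi.1
    · intro i _ j _ hij
      simp only [Fin.mk.injEq] at hij
      exact Fin.ext (by omega)
  refine ⟨by omega, by omega, by omega⟩
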